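/- For any two positive integers r and s and any two rooted trees T_1 and T_2, if Duplicator wins the game ehr[T_1, T_2, s+1; r] (with (s+1)·r rounds and a forced switch after every r rounds), then Duplicator also wins the game EHR[T_1, T_2, s, r] (with r rounds and at most s switches chosen freely by Spoiler). -/

import Mathlib

/-! ## Rooted trees -/

/-- A rooted tree structure: a vertex type, a root, and a parent map
(`parent v = none` is intended to hold exactly when `v` is the root). -/
structure RTree where
  V : Type
  root : V
  parent : V → Option V

namespace RTree

/-- Iterate the parent map `n` times. -/
def parentIter (T : RTree) : ℕ → T.V → Option T.V
  | 0, v => some v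
  | n + 1, v => (T.parent v).bind (T.parentIter n)

/-- `u` is a descendant of `v` (possibly `u = v`). -/
def IsDesc (T : RTree) (v u : T.V) : Prop :=
  ∃ n, T.parentIter n u = some v

/-- The structure is a genuine rooted, locally finite tree:
exactly the root has no parent, every vertex reaches the root by iterating
the parent map (connectivity and acyclicity), and every vertex has finitely
many children (local finiteness). -/
def IsTree (T : RTree) : Prop :=
  (∀ v, T.parent v = none ↔ v = T.root) ∧
  (∀ v, ∃ n, T.parentIter n v = some T.root) ∧
  (∀ v, {u | T.parent u = some v}.Finite)

open Classical in
/-- The subtree `T(v)` consisting of `v` and all its descendants, rooted at `v`. -/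
noncomputable def subtree (T : RTree) (v : T.V) : RTree where
  V := {u : T.V // T.IsDesc v u}
  root := ⟨v, 0, rfl⟩
  parent u :=
    if u.1 = v then none
    else (T.parent u.1).bind fun w =>
      if h : T.IsDesc v w then some ⟨w, h⟩ else none

end RTree

/-- An isomorphism of rooted trees: a bijection of vertices mapping root to
root and commuting with the parent maps. -/
structure TreeIso (S T : RTree) where
  toEquiv : S.V ≃ T.V
  map_root : toEquiv S.root = T.root
  map_parent : ∀ v, (S.parent v).map toEquiv = T.parent (toEquiv v)

/-! ## First-order logic of rooted trees -/

/-- Terms: variables (de Bruijn indices) and the constant `R` for the root. -/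
inductive FOTerm where
  | var : ℕ → FOTerm
  | root : FOTerm
deriving DecidableEq

/-- First-order formulas in the language of rooted trees: equality `x = y`,
the parent relation `parentOf t t'` (meaning `π(t') = t`, i.e. `t` is the
parent of `t'`), Boolean connectives, and quantifiers (de Bruijn style). -/
inductive FOFormula where
  | eq : FOTerm → FOTerm → FOFormula
  | parentOf : FOTerm → FOTerm → FOFormula
  | not : FOFormula → FOFormula
  | and : FOFormula → FOFormula → FOFormula
  | or : FOFormula → FOFormula → FOFormula
  | imp : FOFormula → FOFormula → FOFormula
  | all : FOFormula → FOFormula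
  | ex : FOFormula → FOFormula
deriving DecidableEq

namespace FOTerm

def eval (T : RTree) (env : ℕ → T.V) : FOTerm → T.V
  | var n => env n
  | root => T.root

def freeBound : FOTerm → ℕ
  | var n => n + 1
  | root => 0

end FOTerm

/-- Kinds of quantifiers, used to count alternations. -/
inductive QKind where
  | ex | all
deriving DecidableEq

/-- The dual of a quantifier kind. -/
def QKind.dual : QKind → QKind
  | .ex => .all
  | .all => .ex

namespace FOFormula

/-- Satisfaction of a formula in a rooted tree under an environment. -/
def Sat (T : RTree) : FOFormula → (ℕ → T.V) → Prop
  | eq t₁ t₂, env => t₁.eval T env = t₂.eval T env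
  | parentOf t₁ t₂, env => T.parent (t₂.eval T env) = some (t₁.eval T env)
  | not φ, env => ¬ φ.Sat T env
  | and φ ψ, env => φ.Sat T env ∧ ψ.Sat T env
  | or φ ψ, env => φ.Sat T env ∨ ψ.Sat T env
  | imp φ ψ, env => φ.Sat T env → ψ.Sat T env
  | all φ, env => ∀ w : T.V, φ.Sat T (fun n => match n with | 0 => w | Nat.succ k => env k)
  | ex φ, env => ∃ w : T.V, φ.Sat T (fun n => match n with | 0 => w | Nat.succ k => env k)

/-- Quantifier depth: the maximum number of nested quantifiers. -/
def qd : FOFormula → ℕ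
  | eq _ _ => 0
  | parentOf _ _ => 0
  | not φ => φ.qd
  | and φ ψ => max φ.qd ψ.qd
  | or φ ψ => max φ.qd ψ.qd
  | imp φ ψ => max φ.qd ψ.qd
  | all φ => φ.qd + 1
  | ex φ => φ.qd + 1

/-- Auxiliary alternation count: `aqdAux φ pol q` is the maximum number of
alternations between (effectively) existential and universal quantifiers along
a nested quantifier sequence of `φ`, given the current polarity `pol`
(`true` = positive; negations and antecedents of implications flip it, so that
e.g. a `∀` under a negation counts as an `∃`) and the effective kind `q` of
the innermost enclosing quantifier (if any). -/
def aqdAux : FOFormula → Bool → Option QKind → ℕ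
  | eq _ _, _, _ => 0
  | parentOf _ _, _, _ => 0
  | not φ, pol, q => φ.aqdAux (!pol) q
  | and φ ψ, pol, q => max (φ.aqdAux pol q) (ψ.aqdAux pol q)
  | or φ ψ, pol, q => max (φ.aqdAux pol q) (ψ.aqdAux pol q)
  | imp φ ψ, pol, q => max (φ.aqdAux (!pol) q) (ψ.aqdAux pol q)
  | all φ, pol, q =>
      (if q = some (if pol then QKind.ex else QKind.all) then 1 else 0) +
        φ.aqdAux pol (some (if pol then QKind.all else QKind.ex))
  | ex φ, pol, q =>
      (if q = some (if pol then QKind.all else QKind.ex) then 1 else 0) +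
        φ.aqdAux pol (some (if pol then QKind.ex else QKind.all))

/-- The number of alternations of quantifiers of a formula: the maximum number
of switches between (effectively) existential and universal quantifiers in a
nested quantifier sequence.  Purely existential or purely universal formulas
have `aqd = 0`. -/
def aqd (φ : FOFormula) : ℕ := φ.aqdAux true none

/-- A bound on the free variables of a formula: all free de Bruijn indices
are `< freeBound`. -/
def freeBound : FOFormula → ℕ
  | eq t₁ t₂ => max t₁.freeBound t₂.freeBound
  | parentOf t₁ t₂ => max t₁.freeBound t₂.freeBound
  | not φ => φ.freeBound
  | and φ ψ => max φ.freeBound ψ.freeBound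
  | or φ ψ => max φ.freeBound ψ.freeBound
  | imp φ ψ => max φ.freeBound ψ.freeBound
  | all φ => φ.freeBound - 1
  | ex φ => φ.freeBound - 1

/-- A sentence is a formula with no free variables. -/
def IsSentence (φ : FOFormula) : Prop := φ.freeBound = 0

end FOFormula

/-- A (closed) formula holds in a rooted tree. -/
def Models (T : RTree) (φ : FOFormula) : Prop :=
  φ.Sat T (fun _ => T.root)

/-- The formula `P_i(x)`, with free variable `x` being de Bruijn index `0`:
`P_0(x) = ∀ y ¬(π(y) = x)` and `P_{i+1}(x) = ∀ y (π(y) = x → ¬ P_i(y))`. -/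
def Pform : ℕ → FOFormula
  | 0 => .all (.not (.parentOf (.var 1) (.var 0)))
  | i + 1 => .all (.imp (.parentOf (.var 1) (.var 0)) (.not (Pform i)))

/-- The sentence `KEIN_i = P_i(R)`. -/
def KEIN : ℕ → FOFormula
  | 0 => .all (.not (.parentOf .root (.var 0)))
  | i + 1 => .all (.imp (.parentOf .root (.var 0)) (.not (Pform i)))

/-! ## Ehrenfeucht games -/

/-- The winning condition for Duplicator: for all pairs `(x_i, y_i)`, `(x_j, y_j)`
in the list of selected/designated pairs, (Main 1) `π(x_j) = x_i ↔ π(y_j) = y_i`,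
and (Main 2) `x_i = x_j ↔ y_i = y_j`. -/
def GoodPairs (T₁ T₂ : RTree) (ps : List (T₁.V × T₂.V)) : Prop :=
  ∀ p ∈ ps, ∀ q ∈ ps,
    (T₁.parent p.1 = some q.1 ↔ T₂.parent p.2 = some q.2) ∧
    (p.1 = q.1 ↔ p.2 = q.2)

/-- Duplicator wins the scheduled Ehrenfeucht game on `T₁, T₂` in which Spoiler
must play his moves in consecutive batches, the batch sizes given by the list
`sched`, switching trees after each batch; `side = true` means Spoiler currently
plays on `T₁` (Duplicator answering on `T₂`), `side = false` means Spoiler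
currently plays on `T₂`.  The list `ps` records the pairs selected so far
(including designated pairs and the pair of roots); Duplicator wins when the
final configuration satisfies `GoodPairs`. -/
def DupWinsSched (T₁ T₂ : RTree) : List ℕ → Bool → List (T₁.V × T₂.V) → Prop
  | [], _, ps => GoodPairs T₁ T₂ ps
  | 0 :: rest, side, ps => DupWinsSched T₁ T₂ rest (!side) ps
  | (n + 1) :: rest, side, ps =>
      if side then
        ∀ x : T₁.V, ∃ y : T₂.V, DupWinsSched T₁ T₂ (n :: rest) side ((x, y) :: ps)
      else
        ∀ y : T₂.V, ∃ x : T₁.V, DupWinsSched T₁ T₂ (n :: rest) side ((x, y) :: ps)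
termination_by sched _ _ => (sched.length, sched.sum)
decreasing_by
  all_goals
    first
      | exact Prod.Lex.left _ _ (Nat.lt_succ_self _)
      | exact Prod.Lex.right _ (by simp [List.sum_cons])

/-- The cost (in switches) for Spoiler of playing on side `side` when his
previous move (if any) was on side `last`. -/
def switchCost (last : Option Bool) (side : Bool) : ℕ :=
  match last with
  | none => 0
  | some b => if b = side then 0 else 1

/-- Duplicator wins the Ehrenfeucht game `EHR` with `rounds` remaining rounds,
`sw` remaining switches allowed to Spoiler, `last` the side on which Spoiler
made his previous move (if any), and `ps` the pairs selected so far.  In each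
round Spoiler picks a side (paying a switch if he changes trees, which he may
do only if he has switches left) and a vertex in that tree, and Duplicator
answers in the other tree. -/
def DupWinsEHRAux (T₁ T₂ : RTree) :
    ℕ → ℕ → Option Bool → List (T₁.V × T₂.V) → Prop
  | 0, _, _, ps => GoodPairs T₁ T₂ ps
  | r + 1, sw, last, ps =>
      ∀ side : Bool, switchCost last side ≤ sw →
        if side then
          ∀ x : T₁.V, ∃ y : T₂.V,
            DupWinsEHRAux T₁ T₂ r (sw - switchCost last side) (some side) ((x, y) :: ps)
        else
          ∀ y : T₂.V, ∃ x : T₁.V,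
            DupWinsEHRAux T₁ T₂ r (sw - switchCost last side) (some side) ((x, y) :: ps)

/-- Duplicator wins the game `EHR[T₁, T₂, s, r]`: `r` rounds, Spoiler may start
on either tree and make at most `s` switches. -/
def DupWinsEHR (T₁ T₂ : RTree) (s r : ℕ) : Prop :=
  DupWinsEHRAux T₁ T₂ r s none [(T₁.root, T₂.root)]

/-! ## The trees `T₁^{(s,k,m)}` and `T₂^{(s,k,m)}` -/

/-- The one-vertex rooted tree. -/
def single : RTree where
  V := PUnit
  root := PUnit.unit
  parent := fun _ => none

/-- Hang the trees `f 0, …, f (n-1)` from a new root: the root of each `f i`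
becomes a child of the new root. -/
def hang (n : ℕ) (f : Fin n → RTree) : RTree where
  V := Unit ⊕ (Σ i : Fin n, (f i).V)
  root := Sum.inl ()
  parent := fun x =>
    match x with
    | Sum.inl _ => none
    | Sum.inr ⟨i, w⟩ =>
      match (f i).parent w with
      | none => some (Sum.inl ())
      | some w' => some (Sum.inr ⟨i, w'⟩)

/-- The pair of trees `(T₁^{(s,k,m)}, T₂^{(s,k,m)})`, indexed by `s` (the
parameter `k` plays no role in the construction).  Conventions for `s = 0`:
`T₁^{(0)}` is a single vertex and `T₂^{(0)}` is a star of `m` childless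
children.  For `s ≥ 1`: in `T₁^{(s+1)}` the root has `m+1` children, from each
of which hangs a copy of `T₂^{(s)}`; in `T₂^{(s+1)}` the root has `m+1`
children, from `m` of which hangs a copy of `T₂^{(s)}` and from the remaining
one hangs a copy of `T₁^{(s)}`. -/
def TreePair (m : ℕ) : ℕ → RTree × RTree
  | 0 => (single, hang m fun _ => single)
  | s + 1 =>
      (hang (m + 1) fun _ => (TreePair m s).2,
       hang (m + 1) fun i => if i.1 = m then (TreePair m s).1 else (TreePair m s).2)

/-- The tree `T₁^{(s,k,m)}`. -/
def Tree1 (s k m : ℕ) : RTree := (TreePair m s).1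

/-- The tree `T₂^{(s,k,m)}`. -/
def Tree2 (s k m : ℕ) : RTree := (TreePair m s).2

/-- Playing out the rest of a scheduled game with arbitrary Spoiler moves
still yields a good final configuration extending the current pairs. -/
lemma dupWinsSched_burn (T₁ T₂ : RTree) :
    ∀ sched (side : Bool) (ps : List (T₁.V × T₂.V)),
      DupWinsSched T₁ T₂ sched side ps →
      ∃ ps', ps ⊆ ps' ∧ GoodPairs T₁ T₂ ps' := by
  intro sched
  induction sched with
  | nil =>
    intro side ps h
    rw [DupWinsSched] at h
    exact ⟨ps, List.Subset.refl _, h⟩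
  | cons n rest ih =>
    induction n with
    | zero =>
      intro side ps h
      rw [DupWinsSched] at h
      exact ih _ _ h
    | succ n ihn =>
      intro side ps h
      rw [DupWinsSched] at h
      cases side with
      | true =>
        simp only [if_true] at h
        obtain ⟨y, hy⟩ := h T₁.root
        obtain ⟨ps', hsub, hg⟩ := ihn _ _ hy
        exact ⟨ps', fun p hp => hsub (List.mem_cons_of_mem _ hp), hg⟩
      | false =>
        simp only [Bool.false_eq_true, if_false] at h
        obtain ⟨x, hx⟩ := h T₂.root
        obtain ⟨ps', hsub, hg⟩ := ihn _ _ hx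
        exact ⟨ps', fun p hp => hsub (List.mem_cons_of_mem _ hp), hg⟩

/-- Burning the remainder of the current batch with arbitrary Spoiler moves. -/
lemma dupWinsSched_burnBatch (T₁ T₂ : RTree) :
    ∀ n rest (side : Bool) (ps : List (T₁.V × T₂.V)),
      DupWinsSched T₁ T₂ (n :: rest) side ps →
      ∃ ps', ps ⊆ ps' ∧ DupWinsSched T₁ T₂ rest (!side) ps' := by
  intro n
  induction n with
  | zero =>
    intro rest side ps h
    rw [DupWinsSched] at h
    exact ⟨ps, List.Subset.refl _, h⟩
  | succ n ih =>
    intro rest side ps h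
    rw [DupWinsSched] at h
    cases side with
    | true =>
      simp only [if_true] at h
      obtain ⟨y, hy⟩ := h T₁.root
      obtain ⟨ps', hsub, hw⟩ := ih _ _ _ hy
      exact ⟨ps', fun p hp => hsub (List.mem_cons_of_mem _ hp), hw⟩
    | false =>
      simp only [Bool.false_eq_true, if_false] at h
      obtain ⟨x, hx⟩ := h T₂.root
      obtain ⟨ps', hsub, hw⟩ := ih _ _ _ hx
      exact ⟨ps', fun p hp => hsub (List.mem_cons_of_mem _ hp), hw⟩

/-- Main simulation invariant: a scheduled win with enough remaining capacity
yields a win in the free game. -/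
lemma key_sim (T₁ T₂ : RTree) (r : ℕ) (hr : 0 < r) :
    ∀ rr sw (b : Bool) (ps : List (T₁.V × T₂.V)),
      (∃ n t ps', ps ⊆ ps' ∧
          DupWinsSched T₁ T₂ (n :: List.replicate t r) b ps' ∧
          rr ≤ n ∧ n ≤ r ∧ sw ≤ t) →
      DupWinsEHRAux T₁ T₂ rr sw (some b) ps := by
  intro rr
  induction rr with
  | zero =>
    rintro sw b ps ⟨n, t, ps', hsub, hw, -, -, -⟩
    obtain ⟨ps'', hs2, hg⟩ := dupWinsSched_burn T₁ T₂ _ _ _ hw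
    exact fun p hp q hq => hg p (hs2 (hsub hp)) q (hs2 (hsub hq))
  | succ rrp ih =>
    rintro sw b ps ⟨n, t, ps', hsub, hw, hrrn, hnr, hswt⟩
    intro side hcost
    by_cases hbs : side = b
    · -- same side: cost 0, play in the current batch
      subst hbs
      have hc0 : switchCost (some side) side = 0 := by simp [switchCost]
      rw [hc0] at hcost ⊢
      obtain ⟨n', rfl⟩ : ∃ n', n = n' + 1 :=
        ⟨n - 1, by omega⟩
      rw [DupWinsSched] at hw
      cases side with
      | true =>
        simp only [if_true] at hw ⊢
        intro x
        obtain ⟨y, hy⟩ := hw x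
        exact ⟨y, ih _ _ _ ⟨n', t, (x, y) :: ps',
          List.cons_subset_cons _ hsub, hy, by omega, by omega, hswt⟩⟩
      | false =>
        simp only [Bool.false_eq_true, if_false] at hw ⊢
        intro y
        obtain ⟨x, hx⟩ := hw y
        exact ⟨x, ih _ _ _ ⟨n', t, (x, y) :: ps',
          List.cons_subset_cons _ hsub, hx, by omega, by omega, hswt⟩⟩
    · -- switch: cost 1, burn current batch and move to the next one
      have hside : side = !b := by
        cases side <;> cases b <;> first | rfl | exact (hbs rfl).elim
      subst hside
      have hc1 : switchCost (some b) (!b) = 1 := by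
        cases b <;> rfl
      rw [hc1] at hcost ⊢
      have ht : 0 < t := lt_of_lt_of_le hcost hswt
      obtain ⟨t', rfl⟩ : ∃ t', t = t' + 1 := ⟨t - 1, by omega⟩
      obtain ⟨ps'', hsub2, hw2⟩ := dupWinsSched_burnBatch T₁ T₂ _ _ _ _ hw
      rw [List.replicate_succ] at hw2
      obtain ⟨r', rfl⟩ : ∃ r', r = r' + 1 := ⟨r - 1, by omega⟩
      rw [DupWinsSched] at hw2
      cases b with
      | true =>
        simp only [Bool.not_true, Bool.false_eq_true, if_false] at hw2 ⊢
        intro y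
        obtain ⟨x, hx⟩ := hw2 y
        refine ⟨x, ih _ _ _ ⟨r', t', (x, y) :: ps'',
          List.cons_subset_cons _ (fun p hp => hsub2 (hsub hp)), hx, by omega, by omega,
          by omega⟩⟩
      | false =>
        simp only [Bool.not_false, if_true] at hw2 ⊢
        intro x
        obtain ⟨y, hy⟩ := hw2 x
        refine ⟨y, ih _ _ _ ⟨r', t', (x, y) :: ps'',
          List.cons_subset_cons _ (fun p hp => hsub2 (hsub hp)), hy, by omega, by omega,
          by omega⟩⟩

/-- If Duplicator wins `ehr[T₁, T₂, s+1; r]` (with `(s+1)·r`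
rounds and a forced switch after every `r` rounds, Spoiler choosing the
starting tree), then she also wins `EHR[T₁, T₂, s, r]` (with `r` rounds and at
most `s` switches chosen freely by Spoiler). -/
theorem sched_win_implies_EHR_win (T₁ T₂ : RTree) (h₁ : T₁.IsTree) (h₂ : T₂.IsTree)
    (r s : ℕ) (hr : 0 < r) (hs : 0 < s)
    (h : ∀ side : Bool,
        DupWinsSched T₁ T₂ (List.replicate (s + 1) r) side [(T₁.root, T₂.root)]) :
    DupWinsEHR T₁ T₂ s r := by
  unfold DupWinsEHR
  obtain ⟨r', rfl⟩ : ∃ r', r = r' + 1 := ⟨r - 1, by omega⟩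
  intro side hcost
  have hw := h side
  rw [show s + 1 = s + 1 from rfl, List.replicate_succ, DupWinsSched] at hw
  have hc0 : switchCost none side = 0 := rfl
  rw [hc0]
  cases side with
  | true =>
    simp only [if_true] at hw ⊢
    intro x
    obtain ⟨y, hy⟩ := hw x
    exact ⟨y, key_sim T₁ T₂ (r' + 1) (Nat.succ_pos _) r' (s - 0) true _
      ⟨r', s, _, List.Subset.refl _, hy, le_refl _, by omega, by omega⟩⟩
  | false =>
    simp only [Bool.false_eq_true, if_false] at hw ⊢
    intro y
    obtain ⟨x, hx⟩ := hw y
    exact ⟨x, key_sim T₁ T₂ (r' + 1) (Nat.succ_pos _) r' (s - 0) false _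
      ⟨r', s, _, List.Subset.refl _, hx, le_refl _, by omega, by omega⟩⟩
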